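/- Let v₁, …, v_N be distinct unit vectors in ℝ^{n+1} with N ≥ 2, and let S := ⋃ᵢ {t·vᵢ : t ≥ 0} be the cone consisting of the corresponding rays. Then there exist a constant C = C(S) and a map F : ℝ^{n+1} → S such that: (i) F is positively 1-homogeneous (F(λx) = λF(x) for λ > 0); (ii) F is Lipschitz; (iii) F(x) = x for all x ∈ S; (iv) |F(x) − x| ≤ C·dist(x, S) for all x ∈ ℝ^{n+1}. -/

import Mathlib

open scoped InnerProductSpace RealInnerProductSpace
set_option maxHeartbeats 1000000

/-- Lipschitz homogeneous retraction onto a one-dimensional cone: given distinct unit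
vectors `v i` (`N ≥ 2`) in `ℝ^{n+1}` and the cone `S = ⋃ᵢ ℝ₊·vᵢ`, there are a constant
`C = C(S)` and a map `F : ℝ^{n+1} → S` which is positively 1-homogeneous, Lipschitz,
restricts to the identity on `S`, and satisfies `‖F x - x‖ ≤ C dist(x, S)`. -/
theorem stmt_13 {n Nv : ℕ} (hNv : 2 ≤ Nv)
    (v : Fin Nv → EuclideanSpace ℝ (Fin (n + 1)))
    (hunit : ∀ i, ‖v i‖ = 1) (hinj : Function.Injective v) :
    ∃ (C : ℝ) (K : NNReal)
      (F : EuclideanSpace ℝ (Fin (n + 1)) → EuclideanSpace ℝ (Fin (n + 1))),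
      (∀ x, F x ∈ ⋃ i, (fun t : ℝ => t • v i) '' Set.Ici 0) ∧
      (∀ l : ℝ, 0 < l → ∀ x, F (l • x) = l • F x) ∧
      LipschitzWith K F ∧
      (∀ x ∈ ⋃ i, (fun t : ℝ => t • v i) '' Set.Ici 0, F x = x) ∧
      (∀ x, ‖F x - x‖ ≤ C * Metric.infDist x (⋃ i, (fun t : ℝ => t • v i) '' Set.Ici 0)) := by
  classical
  set S := ⋃ i, (fun t : ℝ => t • v i) '' Set.Ici (0:ℝ) with hSdef
  have hNv0 : (0:ℕ) < Nv := by omega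
  have hNv1 : (1:ℕ) < Nv := by omega
  set i0 : Fin Nv := ⟨0, hNv0⟩ with hi0
  set j0 : Fin Nv := ⟨1, hNv1⟩ with hj0
  have hij : i0 ≠ j0 := by simp [hi0, hj0, Fin.ext_iff]
  obtain ⟨δ, hδpos, hδ2, hδle⟩ :
      ∃ δ : ℝ, 0 < δ ∧ δ ≤ 2 ∧ ∀ i j : Fin Nv, i ≠ j → δ ≤ ‖v i - v j‖ := by
    classical
    set P : Finset (Fin Nv × Fin Nv) := Finset.univ.filter (fun p => p.1 ≠ p.2) with hPdef
    have hmemP : ∀ i j : Fin Nv, i ≠ j → (i, j) ∈ P := fun i j hne =>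
      Finset.mem_filter.mpr ⟨Finset.mem_univ _, hne⟩
    have hP : P.Nonempty := ⟨(i0, j0), hmemP _ _ hij⟩
    refine ⟨P.inf' hP (fun p => ‖v p.1 - v p.2‖), ?_, ?_, fun i j hne => Finset.inf'_le _ (hmemP i j hne)⟩
    · rw [Finset.lt_inf'_iff]
      intro p hp
      have hne : p.1 ≠ p.2 := (Finset.mem_filter.mp hp).2
      have : v p.1 ≠ v p.2 := fun h => hne (hinj h)
      simpa [norm_pos_iff, sub_ne_zero] using this
    · refine le_trans (Finset.inf'_le _ (hmemP _ _ hij)) ?_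
      have h2 : ‖v i0 - v j0‖ ≤ ‖v i0‖ + ‖v j0‖ := norm_sub_le _ _
      rw [hunit, hunit] at h2; linarith
  set a : ℝ := 1 - δ^2/8 with hadef
  set c : ℝ := 8/δ^2 with hcdef
  have ha0 : 0 ≤ a := by rw [hadef]; nlinarith
  have ha1 : a < 1 := by rw [hadef]; nlinarith
  have hc : 0 < c := by rw [hcdef]; positivity
  have hca : c * (1 - a) = 1 := by
    rw [hadef, hcdef]; field_simp; ring
  have hiv : ∀ i j, i ≠ j → ⟪v i, v j⟫_ℝ ≤ a := by
    intro i j hne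
    have h1 := hδle i j hne
    have h2 : ‖v i - v j‖^2 = ‖v i‖^2 - 2 * ⟪v i, v j⟫_ℝ + ‖v j‖^2 := norm_sub_sq_real _ _
    rw [hunit, hunit] at h2
    have h3 : δ^2 ≤ ‖v i - v j‖^2 := by nlinarith [norm_nonneg (v i - v j)]
    rw [hadef]; nlinarith
  set φ : Fin Nv → EuclideanSpace ℝ (Fin (n+1)) → ℝ :=
    fun i x => c * max (⟪x, v i⟫_ℝ - a * ‖x‖) 0 with hφdef
  set F : EuclideanSpace ℝ (Fin (n+1)) → EuclideanSpace ℝ (Fin (n+1)) :=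
    fun x => ∑ i, φ i x • v i with hFdef
  have hφnonneg : ∀ i x, 0 ≤ φ i x := fun i x =>
    mul_nonneg hc.le (le_max_right _ _)
  have hφpos : ∀ i x, 0 < φ i x → a * ‖x‖ < ⟪x, v i⟫_ℝ := by
    intro i x h
    by_contra hcon
    push_neg at hcon
    have hmax : max (⟪x, v i⟫_ℝ - a * ‖x‖) 0 = 0 := max_eq_right (by linarith)
    rw [hφdef] at h
    simp only [hmax, mul_zero] at h
    exact lt_irrefl 0 h
  -- at most one φ is positive
  have huniq : ∀ (x) (i j : Fin Nv), i ≠ j → 0 < φ i x → 0 < φ j x → False := by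
    intro x i j hne hi hj
    have hi' := hφpos i x hi
    have hj' := hφpos j x hj
    have hx0 : x ≠ 0 := by
      intro h
      rw [h] at hi'
      simp at hi'
    have hr : 0 < ‖x‖ := norm_pos_iff.mpr hx0
    set u : EuclideanSpace ℝ (Fin (n+1)) := ‖x‖⁻¹ • x with hudef
    have hu1 : ‖u‖ = 1 := by
      rw [hudef, norm_smul, norm_inv, norm_norm, inv_mul_cancel₀ hr.ne']
    have hui : ∀ k : Fin Nv, a * ‖x‖ < ⟪x, v k⟫_ℝ → a < ⟪u, v k⟫_ℝ := by
      intro k hk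
      rw [hudef, real_inner_smul_left]
      have := mul_lt_mul_of_pos_left hk (inv_pos.mpr hr)
      calc a = ‖x‖⁻¹ * (a * ‖x‖) := by field_simp
        _ < ‖x‖⁻¹ * ⟪x, v k⟫_ℝ := this
    have hai := hui i hi'
    have haj := hui j hj'
    have hsq : ∀ k : Fin Nv, a < ⟪u, v k⟫_ℝ → ‖v k - u‖^2 < δ^2/4 := by
      intro k hk
      have h2 : ‖v k - u‖^2 = ‖v k‖^2 - 2 * ⟪v k, u⟫_ℝ + ‖u‖^2 := norm_sub_sq_real _ _
      rw [hunit, hu1, real_inner_comm] at h2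
      rw [hadef] at hk
      nlinarith
    have hsi := hsq i hai
    have hsj := hsq j haj
    have htri : ‖v i - v j‖ ≤ ‖v i - u‖ + ‖v j - u‖ := by
      have : v i - v j = (v i - u) - (v j - u) := by abel
      rw [this]
      exact norm_sub_le _ _
    have hd := hδle i j hne
    have hni : (0:ℝ) ≤ ‖v i - u‖ := norm_nonneg _
    have hnj : (0:ℝ) ≤ ‖v j - u‖ := norm_nonneg _
    have h1 : ‖v i - u‖ < δ/2 := by nlinarith
    have h2 : ‖v j - u‖ < δ/2 := by nlinarith
    linarith
  have hSmem : ∀ i (t : ℝ), 0 ≤ t → t • v i ∈ S := by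
    intro i t ht
    rw [hSdef]
    exact Set.mem_iUnion.mpr ⟨i, ⟨t, ht, rfl⟩⟩
  -- F maps into S
  have hmem : ∀ x, F x ∈ S := by
    intro x
    by_cases h : ∃ i, 0 < φ i x
    · obtain ⟨i, hi⟩ := h
      have hFx : F x = φ i x • v i := by
        rw [hFdef]
        refine Finset.sum_eq_single i (fun j _ hj => ?_) (by simp)
        have : φ j x = 0 := by
          rcases lt_or_eq_of_le (hφnonneg j x) with h' | h'
          · exact absurd hi (fun hi => huniq x j i hj h' hi)
          · exact h'.symm
        rw [this, zero_smul]
      rw [hFx]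
      exact hSmem i _ (hφnonneg i x)
    · push_neg at h
      have hall : ∀ i, φ i x = 0 := fun i => le_antisymm (h i) (hφnonneg i x)
      have : F x = 0 := by
        rw [hFdef]
        exact Finset.sum_eq_zero fun i _ => by rw [hall i, zero_smul]
      rw [this]
      have := hSmem i0 0 le_rfl
      rwa [zero_smul] at this
  -- homogeneity
  have hφhom : ∀ (l : ℝ), 0 < l → ∀ i x, φ i (l • x) = l * φ i x := by
    intro l hl i x
    rw [hφdef]
    simp only
    rw [real_inner_smul_left, norm_smul, Real.norm_eq_abs, abs_of_pos hl]
    have : l * ⟪x, v i⟫_ℝ - a * (l * ‖x‖) = l * (⟪x, v i⟫_ℝ - a * ‖x‖) := by ring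
    rw [this]
    have hmx : l * max (⟪x, v i⟫_ℝ - a * ‖x‖) 0 = max (l * (⟪x, v i⟫_ℝ - a * ‖x‖)) (l * 0) :=
      mul_max_of_nonneg _ _ hl.le
    rw [mul_zero] at hmx
    rw [← hmx]
    ring
  have hhom : ∀ (l : ℝ), 0 < l → ∀ x, F (l • x) = l • F x := by
    intro l hl x
    rw [hFdef]
    simp only
    rw [Finset.smul_sum]
    refine Finset.sum_congr rfl fun i _ => ?_
    rw [hφhom l hl i x, mul_smul]
  -- Lipschitz
  have hφlip : ∀ i x y, |φ i x - φ i y| ≤ (c * (1 + a)) * ‖x - y‖ := by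
    intro i x y
    rw [hφdef]
    simp only
    rw [← mul_sub, abs_mul, abs_of_pos hc]
    rw [mul_assoc]
    refine mul_le_mul_of_nonneg_left ?_ hc.le
    calc |max (⟪x, v i⟫_ℝ - a * ‖x‖) 0 - max (⟪y, v i⟫_ℝ - a * ‖y‖) 0|
        ≤ |(⟪x, v i⟫_ℝ - a * ‖x‖) - (⟪y, v i⟫_ℝ - a * ‖y‖)| :=
          abs_max_sub_max_le_abs _ _ _
      _ = |⟪x - y, v i⟫_ℝ - a * (‖x‖ - ‖y‖)| := by rw [inner_sub_left]; ring_nf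
      _ ≤ |⟪x - y, v i⟫_ℝ| + |a * (‖x‖ - ‖y‖)| := abs_sub _ _
      _ ≤ ‖x - y‖ * ‖v i‖ + a * |‖x‖ - ‖y‖| := by
          rw [abs_mul, abs_of_nonneg ha0]
          gcongr
          · exact abs_real_inner_le_norm _ _
      _ ≤ ‖x - y‖ * 1 + a * ‖x - y‖ := by
          rw [hunit]
          gcongr
          exact abs_norm_sub_norm_le _ _
      _ = (1 + a) * ‖x - y‖ := by ring
  have hFdist : ∀ x y, dist (F x) (F y) ≤ (Nv * (c * (1 + a))) * dist x y := by
    intro x y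
    rw [dist_eq_norm, dist_eq_norm, hFdef]
    simp only
    rw [← Finset.sum_sub_distrib]
    calc ‖∑ i, (φ i x • v i - φ i y • v i)‖
        ≤ ∑ i, ‖φ i x • v i - φ i y • v i‖ := norm_sum_le _ _
      _ ≤ ∑ _i : Fin Nv, (c * (1 + a)) * ‖x - y‖ := by
          refine Finset.sum_le_sum fun i _ => ?_
          rw [← sub_smul, norm_smul, Real.norm_eq_abs, hunit, mul_one]
          exact hφlip i x y
      _ = (Nv * (c * (1 + a))) * ‖x - y‖ := by
          rw [Finset.sum_const, Finset.card_univ, Fintype.card_fin, nsmul_eq_mul]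
          ring
  have hKnn : (0:ℝ) ≤ Nv * (c * (1 + a)) := by positivity
  set K : NNReal := ⟨Nv * (c * (1 + a)), hKnn⟩ with hKdef
  have hlip : LipschitzWith K F :=
    LipschitzWith.of_dist_le_mul fun x y => hFdist x y
  -- retraction on S
  have hret : ∀ x ∈ S, F x = x := by
    intro x hx
    rw [hSdef] at hx
    obtain ⟨i, t, ht, rfl⟩ := Set.mem_iUnion.mp hx
    have ht' : (0:ℝ) ≤ t := ht
    have hφval : ∀ j, φ j (t • v i) = if j = i then t else 0 := by
      intro j
      rw [hφdef]
      simp only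
      rw [real_inner_smul_left, norm_smul, Real.norm_eq_abs, abs_of_nonneg ht', hunit, mul_one]
      by_cases hj : j = i
      · subst hj
        rw [real_inner_self_eq_norm_sq, hunit]
        simp only [if_pos rfl, one_pow]
        have : t * 1 - a * t = (1 - a) * t := by ring
        rw [this, max_eq_left (mul_nonneg (by linarith) ht')]
        calc c * ((1 - a) * t) = (c * (1 - a)) * t := by ring
          _ = t := by rw [hca, one_mul]
      · rw [if_neg hj]
        have hle : ⟪v i, v j⟫_ℝ ≤ a := hiv i j (fun h => hj h.symm)
        have : t * ⟪v i, v j⟫_ℝ - a * t ≤ 0 := by nlinarith [mul_le_mul_of_nonneg_left hle ht']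
        rw [max_eq_right this, mul_zero]
    rw [hFdef]
    simp only
    rw [Finset.sum_eq_single i (fun j _ hj => by rw [hφval j, if_neg hj, zero_smul]) (by simp)]
    rw [hφval i, if_pos rfl]
  -- error estimate
  refine ⟨(K : ℝ) + 1, K, F, fun x => hmem x, hhom, hlip, ?_, ?_⟩
  · exact hret
  · intro x
    have hC : (0:ℝ) < (K : ℝ) + 1 := by positivity
    by_contra hcon
    push_neg at hcon
    have hSne : S.Nonempty := ⟨v i0, by simpa using hSmem i0 1 zero_le_one⟩
    have hlt : Metric.infDist x S < ‖F x - x‖ / ((K : ℝ) + 1) := by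
      rw [lt_div_iff₀ hC]
      calc Metric.infDist x S * ((K:ℝ) + 1) = ((K:ℝ)+1) * Metric.infDist x S := by ring
        _ < ‖F x - x‖ := hcon
    obtain ⟨y, hy, hdy⟩ := (Metric.infDist_lt_iff hSne).mp hlt
    have hbound : ‖F x - x‖ ≤ ((K:ℝ) + 1) * dist x y := by
      have h1 : ‖F x - F y‖ ≤ (K:ℝ) * ‖x - y‖ := by
        have := hlip.dist_le_mul x y
        rwa [dist_eq_norm, dist_eq_norm] at this
      have h2 : F y = y := hret y hy
      calc ‖F x - x‖ = ‖(F x - F y) + (y - x)‖ := by rw [h2, sub_add_sub_cancel]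
        _ ≤ ‖F x - F y‖ + ‖y - x‖ := norm_add_le _ _
        _ ≤ (K:ℝ) * ‖x - y‖ + ‖y - x‖ := by gcongr
        _ = ((K:ℝ) + 1) * dist x y := by
            rw [norm_sub_rev y x, dist_eq_norm]; ring
    have : ‖F x - x‖ < ‖F x - x‖ := by
      calc ‖F x - x‖ ≤ ((K:ℝ)+1) * dist x y := hbound
        _ < ((K:ℝ)+1) * (‖F x - x‖ / ((K:ℝ)+1)) := mul_lt_mul_of_pos_left hdy hC
        _ = ‖F x - x‖ := by field_simp
    exact lt_irrefl _ this
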